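/- (Direct Ingham inequality) Let (μ_n)_{n ∈ ℤ} be a sequence of real numbers and γ > 0 such that μ_{n+1} - μ_n ≥ γ for all n. Then for every T > 0 there exists a constant C = C(T, γ) > 0 such that for every finitely supported sequence (a_n) of complex numbers, ∫_{-T}^{T} | \sum_n a_n e^{i μ_n t} |^2 dt ≤ C \sum_n |a_n|^2. -/

import Mathlib

open Real Complex Finset MeasureTheory


lemma int_abs_le_sq (d : ℤ) : |((d:ℤ):ℝ)| ≤ ((d:ℤ):ℝ)^2 := by
  have h : |d| ≤ d^2 := by
    rcases eq_or_ne d 0 with rfl | hd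
    · simp
    · calc |d| ≤ |d|^2 := le_self_pow₀ (Int.one_le_abs hd) two_ne_zero
        _ = d^2 := sq_abs d
  calc |((d:ℤ):ℝ)| = ((|d| : ℤ) : ℝ) := by rw [Int.cast_abs]
    _ ≤ ((d^2 : ℤ) : ℝ) := by exact_mod_cast h
    _ = ((d:ℤ):ℝ)^2 := by push_cast; ring


lemma gap_aux (μ : ℤ → ℝ) (γ : ℝ) (hgap : ∀ n : ℤ, μ (n+1) - μ n ≥ γ) :
    ∀ n m : ℤ, n ≤ m → γ * ((m : ℝ) - n) ≤ μ m - μ n := by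
  have key : ∀ (n : ℤ) (k : ℕ), γ * k ≤ μ (n + k) - μ n := by
    intro n k
    induction k with
    | zero => simp
    | succ k ih =>
      have h1 : μ ((n + k) + 1) - μ (n + k) ≥ γ := hgap (n + k)
      have h3 : (n : ℤ) + (k + 1 : ℕ) = (n + k) + 1 := by push_cast; ring
      rw [h3]
      push_cast
      push_cast at ih
      linarith
  intro n m hnm
  obtain ⟨k, hk⟩ := Int.le.dest hnm
  have := key n k
  subst hk
  push_cast at this ⊢
  linarith

lemma gap_abs (μ : ℤ → ℝ) (γ : ℝ) (hγ : 0 < γ) (hgap : ∀ n : ℤ, μ (n+1) - μ n ≥ γ) :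
    ∀ n m : ℤ, γ * |((n : ℝ) - m)| ≤ |μ n - μ m| := by
  intro n m
  rcases le_total n m with h | h
  · have := gap_aux μ γ hgap n m h
    have hc : ((n:ℝ)) ≤ (m:ℝ) := by exact_mod_cast h
    rw [_root_.abs_of_nonpos (by linarith), abs_sub_comm]
    calc γ * -((n:ℝ) - m) = γ * ((m:ℝ) - n) := by ring
      _ ≤ μ m - μ n := this
      _ ≤ |μ m - μ n| := le_abs_self _
  · have := gap_aux μ γ hgap m n h
    have hc : ((m:ℝ)) ≤ (n:ℝ) := by exact_mod_cast h
    rw [_root_.abs_of_nonneg (by linarith : (0:ℝ) ≤ (n:ℝ) - m)]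
    calc γ * ((n:ℝ) - m) ≤ μ n - μ m := this
      _ ≤ |μ n - μ m| := le_abs_self _

lemma W_summable (c : ℝ) (hc : 0 < c) : Summable (fun k : ℤ => rexp (-c * |(k:ℝ)|)) := by
  have hnat : Summable (fun j : ℕ => rexp (-c * j)) := by
    have : (fun j : ℕ => rexp (-c * j)) = fun j : ℕ => (rexp (-c)) ^ j := by
      funext j; rw [← Real.exp_nat_mul]; ring_nf
    rw [this]
    exact summable_geometric_of_lt_one (exp_nonneg _) (exp_lt_one_iff.mpr (by linarith))
  apply Summable.of_nat_of_neg
  · have : (fun j : ℕ => rexp (-c * |((j:ℤ):ℝ)|)) = fun j : ℕ => rexp (-c * j) := by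
      funext j; push_cast; rw [_root_.abs_of_nonneg (j.cast_nonneg : (0:ℝ) ≤ j)]
    simpa [this] using hnat
  · have : (fun j : ℕ => rexp (-c * |((-(j:ℤ)):ℝ)|)) = fun j : ℕ => rexp (-c * j) := by
      funext j; push_cast; rw [abs_neg, _root_.abs_of_nonneg (j.cast_nonneg : (0:ℝ) ≤ j)]
    simpa [this] using hnat

lemma gauss_int (l : ℝ) :
    ∫ t : ℝ, cexp ((-1) * (t:ℂ)^2 + (I*l) * t + 0) = ((Real.sqrt π * rexp (-l^2/4) : ℝ) : ℂ) := by
  rw [integral_cexp_quadratic (by norm_num : ((-1:ℂ)).re < 0)]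
  have h1 : ((π:ℂ) / -(-1)) = (π:ℂ) := by norm_num
  have h2 : (0 : ℂ) - (I*l)^2/(4*(-1)) = -(l:ℂ)^2/4 := by
    rw [mul_pow, I_sq]; ring
  rw [h1, h2]
  have h3 : (π:ℂ) ^ (1/2 : ℂ) = ((Real.sqrt π : ℝ) : ℂ) := by
    rw [Real.sqrt_eq_rpow, Complex.ofReal_cpow pi_nonneg]
    norm_num
  rw [h3]
  rw [show (-(l:ℂ)^2/4) = ((-l^2/4 : ℝ) : ℂ) by push_cast; ring, ← Complex.ofReal_exp]
  push_cast
  ring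


/-- Direct Ingham inequality: under a uniform gap condition μ_{n+1} - μ n ≥ γ > 0,
∫_{-T}^T |∑ a_n e^{iμ_n t}|² dt ≤ C ∑ |a_n|² for every finite sequence (a_n). -/
theorem direct_ingham (μ : ℤ → ℝ) (γ : ℝ) (hγ : 0 < γ)
    (hgap : ∀ n : ℤ, μ (n + 1) - μ n ≥ γ) (T : ℝ) (hT : 0 < T) :
    ∃ C > 0, ∀ (s : Finset ℤ) (a : ℤ → ℂ),
      (∫ t in (-T)..T,
          ‖∑ n ∈ s, a n * Complex.exp (Complex.I * (μ n) * t)‖ ^ 2)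
        ≤ C * ∑ n ∈ s, ‖a n‖ ^ 2 := by
  set c : ℝ := γ^2/4 with hc
  have hcpos : 0 < c := by positivity
  have hW : Summable (fun k : ℤ => rexp (-c * |(k:ℝ)|)) := W_summable c hcpos
  set K : ℝ := ∑' k : ℤ, rexp (-c * |(k:ℝ)|) with hKdef
  have hK1 : (1:ℝ) ≤ K := by
    have := hW.le_tsum 0 (fun j _ => exp_nonneg _)
    rw [hKdef]
    simpa [neg_mul] using this
  have hKpos : 0 < K := lt_of_lt_of_le one_pos hK1
  refine ⟨Real.exp (T^2) * Real.sqrt π * K, by positivity, ?_⟩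
  intro s a
  set f : ℝ → ℂ := fun t : ℝ => ∑ n ∈ s, a n * Complex.exp (Complex.I * (μ n) * t) with hf
  have hfc : Continuous f := by
    apply continuous_finset_sum
    intro n _
    exact continuous_const.mul (Complex.continuous_exp.comp (by continuity))
  set M : ℝ := ∑ n ∈ s, ‖a n‖ with hM
  have hfb : ∀ t : ℝ, ‖f t‖ ≤ M := by
    intro t
    refine (norm_sum_le _ _).trans (le_of_eq ?_)
    apply Finset.sum_congr rfl
    intro n _
    rw [norm_mul, Complex.norm_exp]
    simp
  have hMnn : 0 ≤ M := Finset.sum_nonneg fun n _ => norm_nonneg _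
  -- integrability of the weighted square
  have hg1 : Integrable (fun t : ℝ => rexp (-t^2) * ‖f t‖^2) := by
    apply Integrable.mono' ((integrable_exp_neg_mul_sq one_pos).const_mul (M^2))
    · exact (Continuous.mul (by continuity) ((continuous_norm.comp hfc).pow 2)).aestronglyMeasurable
    · filter_upwards with t
      rw [Real.norm_eq_abs, _root_.abs_of_nonneg (by positivity)]
      have h1 : ‖f t‖^2 ≤ M^2 := by
        have := hfb t
        nlinarith [norm_nonneg (f t)]
      have h2 : (0:ℝ) < rexp (-t^2) := exp_pos _
      calc rexp (-t^2) * ‖f t‖^2 ≤ rexp (-t^2) * M^2 := by nlinarith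
        _ = M^2 * rexp (-1*t^2) := by rw [neg_one_mul]; ring
  -- Step A : squeeze the interval integral under the Gaussian weight
  have stepA : (∫ t in (-T)..T, ‖f t‖^2)
      ≤ Real.exp (T^2) * ∫ t : ℝ, rexp (-t^2) * ‖f t‖^2 := by
    rw [intervalIntegral.integral_of_le (by linarith : -T ≤ T)]
    have h1 : (∫ t in Set.Ioc (-T) T, ‖f t‖^2)
        ≤ ∫ t in Set.Ioc (-T) T, Real.exp (T^2) * (rexp (-t^2) * ‖f t‖^2) := by
      apply setIntegral_mono_on
      · exact Continuous.integrableOn_Ioc ((continuous_norm.comp hfc).pow 2)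
      · exact (hg1.const_mul _).integrableOn
      · exact measurableSet_Ioc
      · intro t ht
        obtain ⟨h3, h4⟩ := ht
        have h2 : t^2 ≤ T^2 := by nlinarith
        have h5 : (1:ℝ) ≤ Real.exp (T^2) * rexp (-t^2) := by
          rw [← Real.exp_add]
          calc (1:ℝ) = rexp 0 := by simp
            _ ≤ rexp (T^2 + -t^2) := Real.exp_le_exp.mpr (by linarith)
        nlinarith [sq_nonneg (‖f t‖)]
    have h2 : (∫ t in Set.Ioc (-T) T, Real.exp (T^2) * (rexp (-t^2) * ‖f t‖^2))
        ≤ ∫ t : ℝ, Real.exp (T^2) * (rexp (-t^2) * ‖f t‖^2) := by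
      apply setIntegral_le_integral (hg1.const_mul _)
      filter_upwards with t
      positivity
    calc (∫ t in Set.Ioc (-T) T, ‖f t‖^2) ≤ _ := h1
      _ ≤ _ := h2
      _ = Real.exp (T^2) * ∫ t : ℝ, rexp (-t^2) * ‖f t‖^2 :=
          integral_const_mul _ _
  -- the pointwise expansion
  have key : ∀ t : ℝ, ((rexp (-t^2) : ℝ) : ℂ) * (f t * (starRingEnd ℂ) (f t)) =
      ∑ n ∈ s, ∑ m ∈ s, (a n * (starRingEnd ℂ) (a m))
        * cexp ((-1) * (t:ℂ)^2 + (I*(((μ n : ℝ) : ℂ) - ((μ m : ℝ) : ℂ))) * t + 0) := by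
    intro t
    rw [hf]
    rw [map_sum, Finset.sum_mul_sum, Finset.mul_sum]
    refine Finset.sum_congr rfl fun n _ => ?_
    rw [Finset.mul_sum]
    refine Finset.sum_congr rfl fun m _ => ?_
    rw [map_mul, ← Complex.exp_conj]
    have hconj : (starRingEnd ℂ) (Complex.I * ((μ m : ℝ):ℂ) * (t:ℂ)) = -Complex.I * ((μ m:ℝ):ℂ) * (t:ℂ) := by
      simp [map_mul, Complex.conj_I, Complex.conj_ofReal]
    rw [hconj]
    calc ((rexp (-t^2):ℝ):ℂ) * (a n * cexp (Complex.I*((μ n:ℝ):ℂ)*(t:ℂ)) * ((starRingEnd ℂ) (a m) * cexp (-Complex.I*((μ m:ℝ):ℂ)*(t:ℂ))))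
        = (a n * (starRingEnd ℂ) (a m)) * (cexp ((-t^2:ℝ):ℂ) * (cexp (Complex.I*((μ n:ℝ):ℂ)*(t:ℂ)) * cexp (-Complex.I*((μ m:ℝ):ℂ)*(t:ℂ)))) := by
          rw [Complex.ofReal_exp]; push_cast; ring
      _ = (a n * (starRingEnd ℂ) (a m)) * cexp ((-1) * (t:ℂ)^2 + (I*(((μ n : ℝ) : ℂ) - ((μ m : ℝ) : ℂ))) * t + 0) := by
          rw [← Complex.exp_add, ← Complex.exp_add]; congr 1; push_cast; ring
  -- integrability of each Gaussian term
  have hInt : ∀ (n m : ℤ), Integrable (fun t : ℝ => (a n * (starRingEnd ℂ) (a m))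
      * cexp ((-1) * (t:ℂ)^2 + (I*(((μ n : ℝ) : ℂ) - ((μ m : ℝ) : ℂ))) * t + 0)) := by
    intro n m
    exact (integrable_cexp_quadratic' (by norm_num) _ _).const_mul _
  have hg2 : Integrable (fun t : ℝ => ((rexp (-t^2):ℝ):ℂ) * (f t * (starRingEnd ℂ) (f t))) := by
    rw [funext key]
    exact integrable_finset_sum _ (fun n _ => integrable_finset_sum _ (fun m _ => hInt n m))
  -- the exact value of the weighted integral
  have hIdent : ∫ t : ℝ, rexp (-t^2) * ‖f t‖^2 =
      (∑ n ∈ s, ∑ m ∈ s, (a n * (starRingEnd ℂ) (a m))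
        * ((Real.sqrt π * rexp (-(μ n - μ m)^2/4) : ℝ) : ℂ)).re := by
    have e1 : ∀ t : ℝ, rexp (-t^2) * ‖f t‖^2
        = (((rexp (-t^2):ℝ):ℂ) * (f t * (starRingEnd ℂ) (f t))).re := by
      intro t
      rw [Complex.mul_conj, ← Complex.ofReal_mul, Complex.ofReal_re, Complex.normSq_eq_norm_sq]
    simp_rw [e1]
    have e2 : ∫ t : ℝ, (((rexp (-t^2):ℝ):ℂ) * (f t * (starRingEnd ℂ) (f t))).re
        = (∫ t : ℝ, ((rexp (-t^2):ℝ):ℂ) * (f t * (starRingEnd ℂ) (f t))).re := integral_re hg2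
    rw [e2]
    congr 1
    rw [funext key]
    rw [integral_finset_sum _ (fun n _ => integrable_finset_sum _ (fun m _ => hInt n m))]
    refine Finset.sum_congr rfl fun n _ => ?_
    rw [integral_finset_sum _ (fun m _ => hInt n m)]
    refine Finset.sum_congr rfl fun m _ => ?_
    rw [integral_const_mul]
    congr 1
    have := gauss_int (μ n - μ m)
    rw [show (((μ n - μ m : ℝ)):ℂ) = ((μ n:ℝ):ℂ) - ((μ m:ℝ):ℂ) by push_cast; ring] at this
    exact this
  -- termwise estimates
  set w : ℤ → ℤ → ℝ := fun n m => rexp (-c * |(n:ℝ) - m|) with hw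
  have hwsymm : ∀ n m : ℤ, w n m = w m n := by
    intro n m; simp only [hw]; rw [abs_sub_comm]
  have hterm : ∀ n m : ℤ, ((a n * (starRingEnd ℂ) (a m))
        * ((Real.sqrt π * rexp (-(μ n - μ m)^2/4) : ℝ) : ℂ)).re
      ≤ ((‖a n‖)^2 + (‖a m‖)^2)/2 * (Real.sqrt π * w n m) := by
    intro n m
    have hexp : rexp (-(μ n - μ m)^2/4) ≤ w n m := by
      simp only [hw]
      apply Real.exp_le_exp.mpr
      rw [hc]
      have A := gap_abs μ γ hγ hgap n m
      have B : |(n:ℝ) - m| ≤ ((n:ℝ) - m)^2 := by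
        have := int_abs_le_sq (n - m)
        push_cast at this
        exact this
      nlinarith [mul_self_le_mul_self (mul_nonneg hγ.le (abs_nonneg ((n:ℝ) - m))) A,
        mul_le_mul_of_nonneg_left B (sq_nonneg γ),
        _root_.sq_abs (μ n - μ m), _root_.sq_abs ((n:ℝ) - m), abs_nonneg ((n:ℝ) - m)]
    calc ((a n * (starRingEnd ℂ) (a m)) * ((Real.sqrt π * rexp (-(μ n - μ m)^2/4) : ℝ) : ℂ)).re
        ≤ ‖(a n * (starRingEnd ℂ) (a m)) * ((Real.sqrt π * rexp (-(μ n - μ m)^2/4) : ℝ) : ℂ)‖ :=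
          Complex.re_le_norm _
      _ = ‖a n‖ * ‖a m‖ * (Real.sqrt π * rexp (-(μ n - μ m)^2/4)) := by
          rw [norm_mul, norm_mul, Complex.norm_conj, Complex.norm_real, Real.norm_eq_abs,
            _root_.abs_of_nonneg (by positivity)]
      _ ≤ ((‖a n‖)^2 + (‖a m‖)^2)/2 * (Real.sqrt π * w n m) := by
          have hab : ‖a n‖ * ‖a m‖
              ≤ ((‖a n‖)^2 + (‖a m‖)^2)/2 := by
            nlinarith [sq_nonneg (‖a n‖ - ‖a m‖)]
          have h2 : Real.sqrt π * rexp (-(μ n - μ m)^2/4) ≤ Real.sqrt π * w n m :=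
            mul_le_mul_of_nonneg_left hexp (Real.sqrt_nonneg _)
          exact mul_le_mul hab h2 (by positivity) (by positivity)
  -- row sums
  have hrow : ∀ n : ℤ, ∑ m ∈ s, w n m ≤ K := by
    intro n
    have hinj : Function.Injective (fun m : ℤ => n - m) := by
      intro x y h
      simp only at h
      omega
    have hsum2 : Summable (fun m : ℤ => rexp (-c * |((n - m : ℤ):ℝ)|)) := hW.comp_injective hinj
    have he : ∀ m : ℤ, w n m = rexp (-c * |((n - m : ℤ):ℝ)|) := by
      intro m
      have : ((n - m : ℤ):ℝ) = (n:ℝ) - m := by push_cast; ring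
      simp only [hw, this]
    calc ∑ m ∈ s, w n m = ∑ m ∈ s, rexp (-c * |((n - m : ℤ):ℝ)|) :=
          Finset.sum_congr rfl fun m _ => he m
      _ ≤ ∑' m : ℤ, rexp (-c * |((n - m : ℤ):ℝ)|) :=
          Summable.sum_le_tsum s (fun m _ => exp_nonneg _) hsum2
      _ = K := by rw [hKdef]; exact (Equiv.subLeft n).tsum_eq (fun k : ℤ => rexp (-c * |(k:ℝ)|))
  -- summing up
  have hsum : (∑ n ∈ s, ∑ m ∈ s, (a n * (starRingEnd ℂ) (a m))
        * ((Real.sqrt π * rexp (-(μ n - μ m)^2/4) : ℝ) : ℂ)).re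
      ≤ ∑ n ∈ s, ∑ m ∈ s,
        ((‖a n‖)^2 + (‖a m‖)^2)/2 * (Real.sqrt π * w n m) := by
    rw [Complex.re_sum]
    refine Finset.sum_le_sum fun n _ => ?_
    rw [Complex.re_sum]
    exact Finset.sum_le_sum fun m _ => hterm n m
  have hsplit : ∑ n ∈ s, ∑ m ∈ s,
        ((‖a n‖)^2 + (‖a m‖)^2)/2 * (Real.sqrt π * w n m)
      = ∑ n ∈ s, ∑ m ∈ s, (‖a n‖)^2 * (Real.sqrt π * w n m) := by
    have e : ∀ n m : ℤ, ((‖a n‖)^2 + (‖a m‖)^2)/2 * (Real.sqrt π * w n m)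
        = ((‖a n‖)^2 * (Real.sqrt π * w n m)
          + (‖a m‖)^2 * (Real.sqrt π * w n m))/2 := by
      intro n m; ring
    have h1 : ∑ n ∈ s, ∑ m ∈ s, (‖a m‖)^2 * (Real.sqrt π * w n m)
        = ∑ n ∈ s, ∑ m ∈ s, (‖a n‖)^2 * (Real.sqrt π * w n m) := by
      rw [Finset.sum_comm]
      exact Finset.sum_congr rfl fun n _ => Finset.sum_congr rfl fun m _ => by rw [hwsymm n m]
    simp_rw [e, ← Finset.sum_div, Finset.sum_add_distrib]
    rw [h1]
    ring
  have final : (∑ n ∈ s, ∑ m ∈ s, (a n * (starRingEnd ℂ) (a m))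
        * ((Real.sqrt π * rexp (-(μ n - μ m)^2/4) : ℝ) : ℂ)).re
      ≤ Real.sqrt π * K * ∑ n ∈ s, ‖a n‖^2 := by
    refine hsum.trans ?_
    rw [hsplit]
    calc ∑ n ∈ s, ∑ m ∈ s, (‖a n‖)^2 * (Real.sqrt π * w n m)
        = ∑ n ∈ s, (‖a n‖)^2 * (Real.sqrt π * ∑ m ∈ s, w n m) := by
          refine Finset.sum_congr rfl fun n _ => ?_
          simp [Finset.mul_sum]
      _ ≤ ∑ n ∈ s, (‖a n‖)^2 * (Real.sqrt π * K) := by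
          refine Finset.sum_le_sum fun n _ => ?_
          exact mul_le_mul_of_nonneg_left
            (mul_le_mul_of_nonneg_left (hrow n) (Real.sqrt_nonneg _)) (sq_nonneg _)
      _ = Real.sqrt π * K * ∑ n ∈ s, ‖a n‖^2 := by
          rw [← Finset.sum_mul]; ring
  calc (∫ t in (-T)..T, ‖f t‖ ^ 2)
      ≤ Real.exp (T^2) * ∫ t : ℝ, rexp (-t^2) * ‖f t‖^2 := stepA
    _ = Real.exp (T^2) * (∑ n ∈ s, ∑ m ∈ s, (a n * (starRingEnd ℂ) (a m))
          * ((Real.sqrt π * rexp (-(μ n - μ m)^2/4) : ℝ) : ℂ)).re := by rw [hIdent]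
    _ ≤ Real.exp (T^2) * (Real.sqrt π * K * ∑ n ∈ s, ‖a n‖^2) :=
        mul_le_mul_of_nonneg_left final (exp_pos _).le
    _ = Real.exp (T^2) * Real.sqrt π * K * ∑ n ∈ s, ‖a n‖ ^ 2 := by ring
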